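/- For all moulds M, N, P : List Ω → k, one has (M ∘ N) ∘ P = M ∘ (N ∘ P); that is, mould composition is associative. (This expresses that mould composition is the convolution product of the incidence bialgebra of the Baez–Dolan construction on the monoid Ω.) -/

import Mathlib

variable {Ω : Type*} [Monoid Ω] {k : Type*} [CommRing k]

open List Composition

lemma map_splitWrtCompositionAux {α β : Type*} (f : α → β) :
    ∀ (ns : List ℕ) (l : List α),
      (l.map f).splitWrtCompositionAux ns = (l.splitWrtCompositionAux ns).map (List.map f)
  | [], l => by simp [List.splitWrtCompositionAux]
  | n :: ns, l => by
      simp [List.splitWrtCompositionAux_cons, map_take, map_drop,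
        ← map_splitWrtCompositionAux f ns]

lemma map_splitWrtComposition' {α β : Type*} (f : α → β) {n : ℕ} (c : Composition n) (l : List α) :
    (l.map f).splitWrtComposition c = (l.splitWrtComposition c).map (List.map f) :=
  map_splitWrtCompositionAux f c.blocks l

lemma splitWrtCompositionAux_flatten {α : Type*} :
    ∀ (L : List (List α)), L.flatten.splitWrtCompositionAux (L.map List.length) = L
  | [] => by simp [List.splitWrtCompositionAux]
  | l :: L => by
      simp [List.splitWrtCompositionAux_cons, List.take_left, List.drop_left,
        splitWrtCompositionAux_flatten L]

lemma splitWrtComposition_eq' {α : Type*} {n : ℕ} (c : Composition n) (L : List (List α))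
    (h : L.map List.length = c.blocks) : L.flatten.splitWrtComposition c = L := by
  show L.flatten.splitWrtCompositionAux c.blocks = L
  rw [← h, splitWrtCompositionAux_flatten]

lemma splitWrtComposition_eq'' {α : Type*} (l : List α) {n : ℕ} (c : Composition n)
    (L : List (List α)) (hL : L.flatten = l) (h : L.map List.length = c.blocks) :
    l.splitWrtComposition c = L := by
  subst hL; exact splitWrtComposition_eq' c L h

lemma prod_map_eq_prod_fin {α β : Type*} [CommMonoid β] (L : List α) {m : ℕ}
    (h : L.length = m) (f : α → β) :
    (L.map f).prod = ∏ i : Fin m, f (L[(i : ℕ)]'(h ▸ i.2)) := by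
  subst h
  conv_lhs => rw [← List.ofFn_getElem (xs := L), List.map_ofFn, List.prod_ofFn]
  rfl

section Key

variable (w : List Ω) (a : Composition w.length) (b : Composition a.length)

lemma hU_flatten : ((w.splitWrtComposition a).splitWrtComposition b).flatten = w.splitWrtComposition a := by
  apply List.flatten_splitWrtCompositionAux
  rw [b.blocks_sum, length_splitWrtComposition]

lemma hU_maplen : ((w.splitWrtComposition a).splitWrtComposition b).map (List.map List.length) = a.blocks.splitWrtComposition b := by
  rw [← map_splitWrtComposition', map_length_splitWrtComposition]

/-- K1 -/
lemma splitWrtComposition_gather :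
    w.splitWrtComposition (a.gather b) = ((w.splitWrtComposition a).splitWrtComposition b).map List.flatten := by
  have hw : (((w.splitWrtComposition a).splitWrtComposition b).map List.flatten).flatten = w := by
    rw [← List.flatten_flatten, hU_flatten, flatten_splitWrtComposition]
  apply splitWrtComposition_eq'' w _ _ hw
  show (((w.splitWrtComposition a).splitWrtComposition b).map List.flatten).map List.length = ((a.blocks.splitWrtComposition b)).map List.sum
  rw [← hU_maplen, List.map_map, List.map_map]
  simp [Function.comp_def, List.length_flatten]

/-- K2 -/
lemma splitWrtComposition_sigmaCompositionAux (i : ℕ) (hi : i < (a.gather b).length)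
    (hi' : i < ((w.splitWrtComposition a).splitWrtComposition b).length) :
    (((w.splitWrtComposition a).splitWrtComposition b)[i]).flatten.splitWrtComposition (a.sigmaCompositionAux b ⟨i, hi⟩) = ((w.splitWrtComposition a).splitWrtComposition b)[i] := by
  apply splitWrtComposition_eq'
  show List.map List.length (((w.splitWrtComposition a).splitWrtComposition b)[i]) =
    (a.blocks.splitWrtComposition b)[i]'(by
      rwa [length_splitWrtComposition, ← length_gather a b])
  calc List.map List.length (((w.splitWrtComposition a).splitWrtComposition b)[i])
      = (((w.splitWrtComposition a).splitWrtComposition b).map (List.map List.length))[i]'(by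
          simpa using hi') := by rw [List.getElem_map]
    _ = _ := List.getElem_of_eq (hU_maplen w a b) _

end Key


/-- The mould product: `(M × N)(w) = ∑_{w = u ++ v} M(u) · N(v)`. -/
def mouldMul (M N : List Ω → k) : List Ω → k := fun w =>
  ∑ i ∈ Finset.range (w.length + 1), M (w.take i) * N (w.drop i)

/-- The mould composition: `(M ∘ N)([]) = M([])` and, for `w` nonempty,
`(M ∘ N)(w) = ∑_{c : Composition |w|} (∏_b N(b)) · M(ν_c(w))`, where the product is
over the blocks `b` of `w` cut according to `c`, and `ν_c(w)` is the list of block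
norms (the products in `Ω` of the entries of each block). -/
def mouldComp (M N : List Ω → k) : List Ω → k := fun w =>
  if w.length = 0 then M [] else
    ∑ c : Composition w.length,
      ((w.splitWrtComposition c).map N).prod *
        M ((w.splitWrtComposition c).map List.prod)

lemma mouldComp_apply (M N : List Ω → k) {v : List Ω} {m : ℕ} (h : v.length = m) (hm : m ≠ 0) :
    mouldComp M N v = ∑ c : Composition m,
      ((v.splitWrtComposition c).map N).prod * M ((v.splitWrtComposition c).map List.prod) := by
  subst h
  simp only [mouldComp]
  rw [if_neg hm]

lemma pointwise_key (M N P : List Ω → k) (w : List Ω) (a : Composition w.length)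
    (b : Composition a.length) :
    ((w.splitWrtComposition a).map P).prod *
        ((((w.splitWrtComposition a).map List.prod).splitWrtComposition b).map N).prod *
        M ((((w.splitWrtComposition a).map List.prod).splitWrtComposition b).map List.prod) =
      (∏ i : Fin (a.gather b).length,
          ((((w.splitWrtComposition (a.gather b))[(i : ℕ)]'(by
              rw [length_splitWrtComposition]; exact i.2)).splitWrtComposition
              (a.sigmaCompositionAux b i)).map P).prod *
            N ((((w.splitWrtComposition (a.gather b))[(i : ℕ)]'(by
              rw [length_splitWrtComposition]; exact i.2)).splitWrtComposition
              (a.sigmaCompositionAux b i)).map List.prod)) *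
        M ((w.splitWrtComposition (a.gather b)).map List.prod) := by
  have hUlen : ((w.splitWrtComposition a).splitWrtComposition b).length = (a.gather b).length := by
    rw [length_splitWrtComposition, length_gather]
  have hsplit : ∀ i : Fin (a.gather b).length,
      ((w.splitWrtComposition (a.gather b))[(i : ℕ)]'(by
          rw [length_splitWrtComposition]; exact i.2)).splitWrtComposition
        (a.sigmaCompositionAux b i) =
      ((w.splitWrtComposition a).splitWrtComposition b)[(i : ℕ)]'((by rw [hUlen]; exact i.2)) := by
    intro i
    have e1 : (w.splitWrtComposition (a.gather b))[(i : ℕ)]'(by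
        rw [length_splitWrtComposition]; exact i.2) =
        (((w.splitWrtComposition a).splitWrtComposition b)[(i : ℕ)]'((by rw [hUlen]; exact i.2))).flatten := by
      rw [List.getElem_of_eq (splitWrtComposition_gather w a b) _, List.getElem_map]
    rw [e1]
    exact splitWrtComposition_sigmaCompositionAux w a b i i.2 _
  -- rewrite the big product
  have hprod : (∏ i : Fin (a.gather b).length,
      ((((w.splitWrtComposition (a.gather b))[(i : ℕ)]'(by
          rw [length_splitWrtComposition]; exact i.2)).splitWrtComposition
          (a.sigmaCompositionAux b i)).map P).prod *
        N ((((w.splitWrtComposition (a.gather b))[(i : ℕ)]'(by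
          rw [length_splitWrtComposition]; exact i.2)).splitWrtComposition
          (a.sigmaCompositionAux b i)).map List.prod)) =
      (((w.splitWrtComposition a).splitWrtComposition b).map
        (fun L => (L.map P).prod * N (L.map List.prod))).prod := by
    rw [prod_map_eq_prod_fin _ hUlen (fun L => (L.map P).prod * N (L.map List.prod))]
    exact Finset.prod_congr rfl fun i _ => by rw [hsplit i]
  rw [hprod]
  have hν : ((w.splitWrtComposition a).map List.prod).splitWrtComposition b =
      ((w.splitWrtComposition a).splitWrtComposition b).map (List.map List.prod) :=
    map_splitWrtComposition' List.prod b (w.splitWrtComposition a)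
  have hMarg : (w.splitWrtComposition (a.gather b)).map List.prod =
      (((w.splitWrtComposition a).map List.prod).splitWrtComposition b).map List.prod := by
    rw [splitWrtComposition_gather w a b, hν, List.map_map, List.map_map]
    refine List.map_congr_left fun L _ => ?_
    simp [Function.comp, List.prod_flatten]
  rw [hMarg, List.prod_map_mul]
  congr 2
  · -- P factor
    have : ((w.splitWrtComposition a).splitWrtComposition b).map
        (fun L => (L.map P).prod) =
        (((w.splitWrtComposition a).splitWrtComposition b).map (List.map P)).map List.prod := by
      rw [List.map_map]; rfl
    rw [this, ← List.prod_flatten, ← List.map_flatten, hU_flatten]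
  · -- N factor
    rw [hν, List.map_map]
    rfl


/-- Mould composition is associative. -/
theorem mouldComp_assoc (M N P : List Ω → k) :
    mouldComp (mouldComp M N) P = mouldComp M (mouldComp N P) := by
  classical
  funext w
  by_cases hw : w.length = 0
  · simp [mouldComp, hw]
  · have hpos : 0 < w.length := Nat.pos_of_ne_zero hw
    have hL : mouldComp (mouldComp M N) P w =
        ∑ x : Σ a : Composition w.length, Composition a.length,
          ((w.splitWrtComposition x.1).map P).prod *
            ((((w.splitWrtComposition x.1).map List.prod).splitWrtComposition x.2).map N).prod *
            M ((((w.splitWrtComposition x.1).map List.prod).splitWrtComposition x.2).map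
              List.prod) := by
      rw [mouldComp_apply _ _ rfl hw, ← Finset.univ_sigma_univ, Finset.sum_sigma]
      refine Finset.sum_congr rfl fun a _ => ?_
      rw [mouldComp_apply M N (v := (w.splitWrtComposition a).map List.prod)
        (by rw [List.length_map, length_splitWrtComposition])
        (a.length_pos_of_pos hpos).ne', Finset.mul_sum]
      exact Finset.sum_congr rfl fun b _ => by ring
    have hR : mouldComp M (mouldComp N P) w =
        ∑ y : Σ c : Composition w.length, ∀ i : Fin c.length, Composition (c.blocksFun i),
          (∏ i : Fin y.1.length,
            ((((w.splitWrtComposition y.1)[(i : ℕ)]'(by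
                rw [length_splitWrtComposition]; exact i.2)).splitWrtComposition
                (y.2 i)).map P).prod *
              N ((((w.splitWrtComposition y.1)[(i : ℕ)]'(by
                rw [length_splitWrtComposition]; exact i.2)).splitWrtComposition
                (y.2 i)).map List.prod)) *
            M ((w.splitWrtComposition y.1).map List.prod) := by
      rw [mouldComp_apply _ _ rfl hw, ← Finset.univ_sigma_univ, Finset.sum_sigma]
      refine Finset.sum_congr rfl fun c _ => ?_
      have hlen : ∀ i : Fin c.length,
          ((w.splitWrtComposition c)[(i : ℕ)]'(by
            rw [length_splitWrtComposition]; exact i.2)).length = c.blocksFun i := by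
        intro i
        calc ((w.splitWrtComposition c)[(i : ℕ)]'(by
              rw [length_splitWrtComposition]; exact i.2)).length
            = ((w.splitWrtComposition c).map List.length)[(i : ℕ)]'(by
              rw [List.length_map, length_splitWrtComposition]; exact i.2) := by
              rw [List.getElem_map]
          _ = c.blocks[(i : ℕ)]'(by
              rw [Composition.blocks_length]; exact i.2) :=
              List.getElem_of_eq (map_length_splitWrtComposition w c) _
          _ = c.blocksFun i := rfl
      rw [prod_map_eq_prod_fin _ (length_splitWrtComposition w c) (mouldComp N P)]
      have hfac : ∀ i : Fin c.length,
          mouldComp N P ((w.splitWrtComposition c)[(i : ℕ)]'(by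
            rw [length_splitWrtComposition]; exact i.2)) =
          ∑ d : Composition (c.blocksFun i),
            ((((w.splitWrtComposition c)[(i : ℕ)]'(by
              rw [length_splitWrtComposition]; exact i.2)).splitWrtComposition d).map P).prod *
            N ((((w.splitWrtComposition c)[(i : ℕ)]'(by
              rw [length_splitWrtComposition]; exact i.2)).splitWrtComposition d).map
              List.prod) := fun i =>
        mouldComp_apply N P (hlen i) (Nat.lt_of_lt_of_le Nat.zero_lt_one (c.one_le_blocksFun i)).ne'
      rw [Finset.prod_congr rfl fun i _ => hfac i, Finset.prod_univ_sum,
        Fintype.piFinset_univ, Finset.sum_mul]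
    rw [hL, hR, ← Equiv.sum_comp (Composition.sigmaEquivSigmaPi w.length)]
    exact Finset.sum_congr rfl fun ⟨a, b⟩ _ => pointwise_key M N P w a b
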